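/- Corollary of the telescoping lemma: Let S be a finite nonempty type, let γ be a real number with 0 ≤ γ < 1, let P and P̂ be row-stochastic matrices on S, let r : S → ℝ, let V be the value function of (P, r, γ), and let μ₀ be a probability vector on S. Define the discounted occupancy vector ρ̂ x = ∑'_{t≥0} γ^t · (μ₀ᵀ P̂^t) x and G x = ∑_y P̂ x y · V y − ∑_y P x y · V y. Then ∑_x μ₀ x · V x = ∑_x ρ̂ x · (r x − γ · G x), and consequently ∑_x μ₀ x · V x ≥ ∑_x ρ̂ x · (r x − γ · |G x|). -/

import Mathlib

/-- Corollary of the telescoping lemma. -/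
theorem telescoping_corollary {S : Type*} [Fintype S] [DecidableEq S] [Nonempty S]
    (γ : ℝ) (hγ0 : 0 ≤ γ) (hγ1 : γ < 1)
    (P Phat : Matrix S S ℝ)
    (hP0 : ∀ x y, 0 ≤ P x y) (hP1 : ∀ x, ∑ y, P x y = 1)
    (hPhat0 : ∀ x y, 0 ≤ Phat x y) (hPhat1 : ∀ x, ∑ y, Phat x y = 1)
    (r : S → ℝ)
    (V : S → ℝ)
    (hV : ∀ x, V x = r x + γ * ∑ y, P x y * V y)
    (μ₀ : S → ℝ) (hμ0 : ∀ x, 0 ≤ μ₀ x) (hμ1 : ∑ x, μ₀ x = 1)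
    (ρhat : S → ℝ)
    (hρ : ∀ x, ρhat x = ∑' t : ℕ, γ ^ t * Matrix.vecMul μ₀ (Phat ^ t) x)
    (G : S → ℝ)
    (hG : ∀ x, G x = (∑ y, Phat x y * V y) - ∑ y, P x y * V y) :
    (∑ x, μ₀ x * V x) = (∑ x, ρhat x * (r x - γ * G x)) ∧
      (∑ x, μ₀ x * V x) ≥ ∑ x, ρhat x * (r x - γ * |G x|) := by
  set μ : ℕ → S → ℝ := fun t => Matrix.vecMul μ₀ (Phat ^ t) with hμdef
  have hμ0' : μ 0 = μ₀ := by simp [hμdef, Matrix.vecMul_one]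
  have hμsucc : ∀ t x, μ (t + 1) x = ∑ z, μ t z * Phat z x := by
    intro t x
    have h : μ (t + 1) = Matrix.vecMul (μ t) Phat := by
      simp only [hμdef, pow_succ, ← Matrix.vecMul_vecMul]
    rw [h]
    simp [Matrix.vecMul, dotProduct]
  have hμnn : ∀ t x, 0 ≤ μ t x := by
    intro t
    induction t with
    | zero => intro x; rw [hμ0']; exact hμ0 x
    | succ t ih =>
      intro x; rw [hμsucc]
      exact Finset.sum_nonneg fun z _ => mul_nonneg (ih z) (hPhat0 z x)
  have hμsum : ∀ t, ∑ x, μ t x = 1 := by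
    intro t
    induction t with
    | zero => simp [hμ0', hμ1]
    | succ t ih =>
      simp only [hμsucc]
      rw [Finset.sum_comm]
      simp [← Finset.mul_sum, hPhat1, ih]
  have hμle : ∀ t x, μ t x ≤ 1 := by
    intro t x
    calc μ t x ≤ ∑ y, μ t y :=
          Finset.single_le_sum (fun y _ => hμnn t y) (Finset.mem_univ x)
      _ = 1 := hμsum t
  -- penalized reward
  set w : S → ℝ := fun x => V x - γ * ∑ y, Phat x y * V y with hwdef
  have hrw : ∀ x, r x - γ * G x = w x := by
    intro x
    have h1 := hV x
    have h2 := hG x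
    simp only [hwdef]
    nlinarith [h1, h2]
  -- a t = γ^t * expected value at time t
  set a : ℕ → ℝ := fun t => γ ^ t * ∑ x, μ t x * V x with hadef
  have hkey : ∀ t, ∑ x, γ ^ t * μ t x * w x = a t - a (t + 1) := by
    intro t
    have h1 : ∑ x, μ (t + 1) x * V x = ∑ z, μ t z * ∑ x, Phat z x * V x := by
      simp only [hμsucc, Finset.sum_mul]
      rw [Finset.sum_comm]
      simp only [Finset.mul_sum]
      apply Finset.sum_congr rfl; intro z _
      apply Finset.sum_congr rfl; intro x _
      ring
    have hsucc : a (t + 1) = ∑ x, γ ^ t * μ t x * (γ * ∑ y, Phat x y * V y) := by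
      simp only [hadef]
      rw [pow_succ, h1, Finset.mul_sum]
      apply Finset.sum_congr rfl; intro z _
      ring
    have hat : a t = ∑ x, γ ^ t * μ t x * V x := by
      simp only [hadef, Finset.mul_sum]
      apply Finset.sum_congr rfl; intro x _
      ring
    rw [hat, hsucc, ← Finset.sum_sub_distrib]
    apply Finset.sum_congr rfl; intro x _
    simp only [hwdef]
    ring
  -- bound constant
  set C : ℝ := ∑ x, |V x| with hCdef
  have habs : ∀ t, |a t| ≤ γ ^ t * C := by
    intro t
    have : |∑ x, μ t x * V x| ≤ C := by
      calc |∑ x, μ t x * V x| ≤ ∑ x, |μ t x * V x| := Finset.abs_sum_le_sum_abs _ _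
        _ ≤ ∑ x, |V x| := by
            apply Finset.sum_le_sum
            intro x _
            rw [abs_mul]
            calc |μ t x| * |V x| ≤ 1 * |V x| := by
                  apply mul_le_mul_of_nonneg_right _ (abs_nonneg _)
                  rw [abs_of_nonneg (hμnn t x)]; exact hμle t x
              _ = |V x| := one_mul _
    calc |a t| = γ ^ t * |∑ x, μ t x * V x| := by
          simp only [hadef]
          rw [abs_mul, abs_pow, abs_of_nonneg hγ0]
      _ ≤ γ ^ t * C := mul_le_mul_of_nonneg_left this (pow_nonneg hγ0 t)
  -- summability of individual terms
  have hsumm : ∀ x, Summable (fun t => γ ^ t * μ t x * w x) := by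
    intro x
    apply Summable.of_norm_bounded (g := fun t => |w x| * γ ^ t)
    · exact (summable_geometric_of_lt_one hγ0 hγ1).mul_left _
    · intro t
      have : ‖γ ^ t * μ t x * w x‖ = γ ^ t * |μ t x| * |w x| := by
        rw [Real.norm_eq_abs, abs_mul, abs_mul, abs_pow, abs_of_nonneg hγ0]
      rw [this]
      have h1 : γ ^ t * |μ t x| ≤ γ ^ t := by
        nlinarith [abs_of_nonneg (hμnn t x), hμle t x, pow_nonneg hγ0 t]
      nlinarith [abs_nonneg (w x), pow_nonneg hγ0 t]
  -- a tends to 0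
  have ha0 : Filter.Tendsto a Filter.atTop (nhds 0) := by
    apply squeeze_zero_norm habs
    have : Filter.Tendsto (fun t : ℕ => γ ^ t * C) Filter.atTop (nhds (0 * C)) :=
      (tendsto_pow_atTop_nhds_zero_of_lt_one hγ0 hγ1).mul_const C
    simpa using this
  -- summability of the telescoping sequence
  have hsummtel : Summable (fun t => a t - a (t + 1)) := by
    have : (fun t => a t - a (t + 1)) = fun t => ∑ x, γ ^ t * μ t x * w x := by
      ext t; rw [hkey]
    rw [this]
    exact (hasSum_sum fun x _ => (hsumm x).hasSum).summable
  -- telescoping sum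
  have htel : HasSum (fun t => a t - a (t + 1)) (a 0) := by
    rw [hsummtel.hasSum_iff_tendsto_nat]
    have hpart : ∀ n, ∑ i ∈ Finset.range n, (a i - a (i + 1)) = a 0 - a n := by
      intro n; exact Finset.sum_range_sub' a n
    simp only [hpart]
    have := (tendsto_const_nhds (x := a 0) (f := Filter.atTop (α := ℕ))).sub ha0
    simpa using this
  -- main computation
  have hmain : ∑ x, μ₀ x * V x = ∑ x, ρhat x * w x := by
    have hρw : ∀ x, ρhat x * w x = ∑' t, γ ^ t * μ t x * w x := by
      intro x
      rw [hρ x, ← tsum_mul_right]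
    have : ∑ x, ρhat x * w x = ∑' t, ∑ x, γ ^ t * μ t x * w x := by
      simp only [hρw]
      exact (Summable.tsum_finsetSum fun x _ => hsumm x).symm
    rw [this]
    have : ∑' t, ∑ x, γ ^ t * μ t x * w x = a 0 := by
      have heq : (fun t => ∑ x, γ ^ t * μ t x * w x) = fun t => a t - a (t + 1) := by
        ext t; exact hkey t
      rw [heq, htel.tsum_eq]
    rw [this]
    simp [hadef, hμ0']
  have hfst : ∑ x, μ₀ x * V x = ∑ x, ρhat x * (r x - γ * G x) := by
    rw [hmain]
    congr 1; ext x; rw [hrw x]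
  refine ⟨hfst, ?_⟩
  rw [hfst]
  apply Finset.sum_le_sum
  intro x _
  have hρnn : 0 ≤ ρhat x := by
    rw [hρ x]
    apply tsum_nonneg
    intro t
    exact mul_nonneg (pow_nonneg hγ0 t) (hμnn t x)
  apply mul_le_mul_of_nonneg_left _ hρnn
  have := le_abs_self (G x)
  nlinarith
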